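/- Let X ≥ 2 and σ > 1/2 be real numbers. Call a positive integer X-admissible if it is squarefree and all of its prime factors are strictly less than X. Then ζ(2σ) · Σ μ(m)μ(n) · k₁^{-4σ} k₂^{-6σ} c^{-6σ} s₂^{-4σ} s₁^{-2σ} m^{-2σ} n^{-2σ}, where the (finite) sum runs over all 7-tuples (k₁, k₂, c, s₂, s₁, m, n) of pairwise coprime X-admissible positive integers, equals ∏_{p prime, p ≥ X} (1 − p^{-2σ})^{-1} · ∏_{p prime, p < X} (1 + 2(p^{2σ}+1)/(p^{4σ}(p^{2σ}−1))). -/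

import Mathlib

open scoped Classical

/-- A positive integer is `X`-admissible if it is squarefree and all of its prime
factors are strictly less than `X`. -/
def XAdmissible (X : ℝ) (n : ℕ) : Prop :=
  Squarefree n ∧ ∀ p : ℕ, p.Prime → p ∣ n → (p : ℝ) < X

section aux
variable {ι : Type*}

lemma cop_prime_prod {p : ℕ} (hp : p.Prime) (s : Finset ι) (g : ι → ℕ)
    (h : ∀ a ∈ s, (g a).Prime) (hne : ∀ a ∈ s, g a ≠ p) :
    Nat.Coprime p (∏ a ∈ s, g a) :=
  Nat.Coprime.prod_right fun a ha => (Nat.coprime_primes hp (h a ha)).mpr (hne a ha).symm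

lemma squarefree_prime_prod (s : Finset ι) (g : ι → ℕ)
    (h : ∀ a ∈ s, (g a).Prime) (hinj : Set.InjOn g s) :
    Squarefree (∏ a ∈ s, g a) := by
  induction s using Finset.cons_induction with
  | empty => simpa using squarefree_one
  | cons a s has ih =>
    rw [Finset.prod_cons]
    have hga := h a (Finset.mem_cons_self a s)
    have hcop : Nat.Coprime (g a) (∏ b ∈ s, g b) := by
      refine cop_prime_prod hga s g (fun b hb => h b (Finset.mem_cons_of_mem hb)) ?_
      intro b hb hbe
      exact has (hinj (Finset.mem_cons_of_mem hb) (Finset.mem_cons_self a s) hbe ▸ hb)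
    exact (Nat.squarefree_mul hcop).mpr ⟨hga.squarefree,
      ih (fun b hb => h b (Finset.mem_cons_of_mem hb))
        (hinj.mono (by intro x hx; exact Finset.mem_cons_of_mem hx))⟩

lemma prime_dvd_prime_prod {q : ℕ} (hq : q.Prime) (s : Finset ι) (g : ι → ℕ)
    (h : ∀ a ∈ s, (g a).Prime) :
    q ∣ (∏ a ∈ s, g a) ↔ ∃ a ∈ s, g a = q := by
  rw [hq.prime.dvd_finset_prod_iff]
  constructor
  · rintro ⟨a, ha, hd⟩
    exact ⟨a, ha, ((Nat.prime_dvd_prime_iff_eq hq (h a ha)).mp hd).symm⟩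
  · rintro ⟨a, ha, rfl⟩
    exact ⟨a, ha, dvd_rfl⟩

end aux

noncomputable def Wfn (s : ℝ) (i : Fin 7) (n : ℕ) : ℝ :=
  (if 5 ≤ (i : ℕ) then (ArithmeticFunction.moebius n : ℝ) else 1) *
    (n : ℝ) ^ (-(![4*s, 6*s, 6*s, 4*s, 2*s, 2*s, 2*s] i))

lemma Wfn_one (s : ℝ) (i : Fin 7) : Wfn s i 1 = 1 := by
  simp [Wfn]

lemma Wfn_mul (s : ℝ) (i : Fin 7) {a b : ℕ} (h : Nat.Coprime a b) :
    Wfn s i (a * b) = Wfn s i a * Wfn s i b := by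
  unfold Wfn
  rw [ArithmeticFunction.isMultiplicative_moebius.map_mul_of_coprime h]
  push_cast
  rw [Real.mul_rpow (Nat.cast_nonneg a) (Nat.cast_nonneg b)]
  by_cases h5 : 5 ≤ (i : ℕ) <;> simp [h5] <;> ring

lemma Wfn_prod {ι : Type*} (s : ℝ) (i : Fin 7) (t : Finset ι) (g : ι → ℕ)
    (h : ∀ a ∈ t, (g a).Prime) (hinj : Set.InjOn g t) :
    Wfn s i (∏ a ∈ t, g a) = ∏ a ∈ t, Wfn s i (g a) := by
  induction t using Finset.cons_induction with
  | empty => simpa using Wfn_one s i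
  | cons a t has ih =>
    rw [Finset.prod_cons, Finset.prod_cons]
    have hcop : Nat.Coprime (g a) (∏ b ∈ t, g b) := by
      refine cop_prime_prod (h a (Finset.mem_cons_self a t)) t g
        (fun b hb => h b (Finset.mem_cons_of_mem hb)) ?_
      intro b hb hbe
      exact has (hinj (Finset.mem_cons_of_mem hb) (Finset.mem_cons_self a t) hbe ▸ hb)
    rw [Wfn_mul s i hcop, ih (fun b hb => h b (Finset.mem_cons_of_mem hb))
      (hinj.mono (by intro x hx; exact Finset.mem_cons_of_mem hx))]

noncomputable def Cfn (s : ℝ) (p : ℕ) (j : Fin 8) : ℝ :=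
  if h : (j : ℕ) < 7 then Wfn s ⟨j, h⟩ p else 1

lemma Cfn_castSucc (s : ℝ) (p : ℕ) (i : Fin 7) : Cfn s p i.castSucc = Wfn s i p := by
  have h : ((i.castSucc : Fin 8) : ℕ) < 7 := by simpa using i.isLt
  rw [Cfn, dif_pos h]
  congr 1

lemma Cfn_last (s : ℝ) (p : ℕ) : Cfn s p (Fin.last 7) = 1 := dif_neg (by simp)

noncomputable def Phi (Q : Finset ℕ) (f : ↥Q → Fin 8) (i : Fin 7) : ℕ :=
  ∏ q ∈ Finset.univ.filter (fun q : ↥Q => f q = i.castSucc), (q : ℕ)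

lemma Wfn_eval0 (s : ℝ) (n : ℕ) : Wfn s 0 n = (n : ℝ) ^ (-(4*s)) := by
  rw [Wfn, show ((0:Fin 7):ℕ) = 0 from rfl,
    show (![4*s, 6*s, 6*s, 4*s, 2*s, 2*s, 2*s] (0:Fin 7)) = 4*s from rfl]
  norm_num

lemma Wfn_eval1 (s : ℝ) (n : ℕ) : Wfn s 1 n = (n : ℝ) ^ (-(6*s)) := by
  rw [Wfn, show ((1:Fin 7):ℕ) = 1 from rfl,
    show (![4*s, 6*s, 6*s, 4*s, 2*s, 2*s, 2*s] (1:Fin 7)) = 6*s from rfl]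
  norm_num

lemma Wfn_eval2 (s : ℝ) (n : ℕ) : Wfn s 2 n = (n : ℝ) ^ (-(6*s)) := by
  rw [Wfn, show ((2:Fin 7):ℕ) = 2 from rfl,
    show (![4*s, 6*s, 6*s, 4*s, 2*s, 2*s, 2*s] (2:Fin 7)) = 6*s from rfl]
  norm_num

lemma Wfn_eval3 (s : ℝ) (n : ℕ) : Wfn s 3 n = (n : ℝ) ^ (-(4*s)) := by
  rw [Wfn, show ((3:Fin 7):ℕ) = 3 from rfl,
    show (![4*s, 6*s, 6*s, 4*s, 2*s, 2*s, 2*s] (3:Fin 7)) = 4*s from rfl]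
  norm_num

lemma Wfn_eval4 (s : ℝ) (n : ℕ) : Wfn s 4 n = (n : ℝ) ^ (-(2*s)) := by
  rw [Wfn, show ((4:Fin 7):ℕ) = 4 from rfl,
    show (![4*s, 6*s, 6*s, 4*s, 2*s, 2*s, 2*s] (4:Fin 7)) = 2*s from rfl]
  norm_num

lemma Wfn_eval5 (s : ℝ) (n : ℕ) :
    Wfn s 5 n = (ArithmeticFunction.moebius n : ℝ) * (n : ℝ) ^ (-(2*s)) := by
  rw [Wfn, show ((5:Fin 7):ℕ) = 5 from rfl,
    show (![4*s, 6*s, 6*s, 4*s, 2*s, 2*s, 2*s] (5:Fin 7)) = 2*s from rfl]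
  norm_num

lemma Wfn_eval6 (s : ℝ) (n : ℕ) :
    Wfn s 6 n = (ArithmeticFunction.moebius n : ℝ) * (n : ℝ) ^ (-(2*s)) := by
  rw [Wfn, show ((6:Fin 7):ℕ) = 6 from rfl,
    show (![4*s, 6*s, 6*s, 4*s, 2*s, 2*s, 2*s] (6:Fin 7)) = 2*s from rfl]
  norm_num

lemma summand_eq_prod (s : ℝ) (v : Fin 7 → ℕ) :
    (ArithmeticFunction.moebius (v 5) : ℝ) * (ArithmeticFunction.moebius (v 6) : ℝ) *
      (v 0 : ℝ) ^ (-(4 * s)) * (v 1 : ℝ) ^ (-(6 * s)) * (v 2 : ℝ) ^ (-(6 * s)) *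
      (v 3 : ℝ) ^ (-(4 * s)) * (v 4 : ℝ) ^ (-(2 * s)) *
      (v 5 : ℝ) ^ (-(2 * s)) * (v 6 : ℝ) ^ (-(2 * s)) = ∏ i : Fin 7, Wfn s i (v i) := by
  rw [Fin.prod_univ_seven, Wfn_eval0, Wfn_eval1, Wfn_eval2, Wfn_eval3, Wfn_eval4,
    Wfn_eval5, Wfn_eval6]
  ring

lemma local_identity (s : ℝ) (hs : 1/2 < s) {p : ℕ} (hp : p.Prime) :
    (1 - (p:ℝ) ^ (-(2*s)))⁻¹ * (∑ j : Fin 8, Cfn s p j)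
      = 1 + 2 * ((p:ℝ)^(2*s) + 1) / ((p:ℝ)^(4*s) * ((p:ℝ)^(2*s) - 1)) := by
  have hp1 : (1:ℝ) < p := by exact_mod_cast hp.one_lt
  have hp0 : (0:ℝ) ≤ p := by positivity
  have hsum : (∑ j : Fin 8, Cfn s p j) = (p:ℝ)^(-(4*s)) + (p:ℝ)^(-(6*s)) + (p:ℝ)^(-(6*s))
      + (p:ℝ)^(-(4*s)) + (p:ℝ)^(-(2*s)) + (-1) * (p:ℝ)^(-(2*s)) + (-1) * (p:ℝ)^(-(2*s)) + 1 := by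
    rw [Fin.sum_univ_eight,
      show Cfn s p 0 = Wfn s 0 p from rfl, show Cfn s p 1 = Wfn s 1 p from rfl,
      show Cfn s p 2 = Wfn s 2 p from rfl, show Cfn s p 3 = Wfn s 3 p from rfl,
      show Cfn s p 4 = Wfn s 4 p from rfl, show Cfn s p 5 = Wfn s 5 p from rfl,
      show Cfn s p 6 = Wfn s 6 p from rfl, show Cfn s p 7 = 1 from rfl,
      Wfn_eval0, Wfn_eval1, Wfn_eval2, Wfn_eval3, Wfn_eval4, Wfn_eval5, Wfn_eval6,
      ArithmeticFunction.moebius_apply_prime hp]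
    push_cast
    ring
  have h2 : (p:ℝ)^(-(2*s)) = ((p:ℝ)^(2*s))⁻¹ := Real.rpow_neg hp0 _
  have h4 : (p:ℝ)^(4*s) = ((p:ℝ)^(2*s))^(2:ℕ) := by
    rw [show (4*s) = 2*s*((2:ℕ):ℝ) by push_cast; ring, Real.rpow_mul hp0, Real.rpow_natCast]
  have h6 : (p:ℝ)^(6*s) = ((p:ℝ)^(2*s))^(3:ℕ) := by
    rw [show (6*s) = 2*s*((3:ℕ):ℝ) by push_cast; ring, Real.rpow_mul hp0, Real.rpow_natCast]
  have h4n : (p:ℝ)^(-(4*s)) = (((p:ℝ)^(2*s))^(2:ℕ))⁻¹ := by rw [Real.rpow_neg hp0, h4]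
  have h6n : (p:ℝ)^(-(6*s)) = (((p:ℝ)^(2*s))^(3:ℕ))⁻¹ := by rw [Real.rpow_neg hp0, h6]
  rw [hsum, h2, h4, h4n, h6n]
  have hu : 1 < (p:ℝ)^(2*s) :=
    (Real.one_lt_rpow_iff_of_pos (by linarith)).mpr (Or.inl ⟨hp1, by linarith⟩)
  set u := (p:ℝ)^(2*s) with hudef
  have hu0 : u ≠ 0 := by positivity
  have hum1 : u - 1 ≠ 0 := by intro h; nlinarith
  have huinv : 1 - u⁻¹ ≠ 0 := by
    have : u⁻¹ < 1 := by
      rw [inv_lt_one_iff₀]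
      right; exact hu
    intro h; nlinarith [this]
  field_simp
  ring

theorem tsum_admissible_eq (X s : ℝ) :
    (∑' v : Fin 7 → ℕ,
        if (∀ i, XAdmissible X (v i)) ∧ (∀ i j, i ≠ j → Nat.Coprime (v i) (v j)) then
          ((ArithmeticFunction.moebius (v 5) : ℝ) *
            (ArithmeticFunction.moebius (v 6) : ℝ) *
            (v 0 : ℝ) ^ (-(4 * s)) * (v 1 : ℝ) ^ (-(6 * s)) * (v 2 : ℝ) ^ (-(6 * s)) *
            (v 3 : ℝ) ^ (-(4 * s)) * (v 4 : ℝ) ^ (-(2 * s)) *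
            (v 5 : ℝ) ^ (-(2 * s)) * (v 6 : ℝ) ^ (-(2 * s)))
        else 0 : ℝ) =
    ∏ p ∈ Finset.filter (fun p : ℕ => p.Prime ∧ (p : ℝ) < X) (Finset.range (⌈X⌉₊ + 1)),
      ∑ j : Fin 8, Cfn s p j := by
  set Q := Finset.filter (fun p : ℕ => p.Prime ∧ (p : ℝ) < X) (Finset.range (⌈X⌉₊ + 1)) with hQdef
  have hQmem : ∀ {p : ℕ}, p ∈ Q ↔ p.Prime ∧ (p : ℝ) < X := by
    intro p
    simp only [hQdef, Finset.mem_filter, Finset.mem_range]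
    constructor
    · rintro ⟨-, h⟩; exact h
    · rintro ⟨hp, hlt⟩
      refine ⟨?_, hp, hlt⟩
      have h1 : (p : ℝ) ≤ (⌈X⌉₊ : ℝ) := hlt.le.trans (Nat.le_ceil X)
      have h2 : p ≤ ⌈X⌉₊ := by exact_mod_cast h1
      omega
  have hprime : ∀ q : ↥Q, (q : ℕ).Prime := fun q => (hQmem.mp q.2).1
  have hinj : ∀ s' : Finset ↥Q, Set.InjOn (fun q : ↥Q => (q : ℕ)) s' :=
    fun _ a _ b _ h => Subtype.ext h
  have hdvd : ∀ (f : ↥Q → Fin 8) (i : Fin 7) (p : ℕ), p.Prime →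
      (p ∣ Phi Q f i ↔ ∃ hp : p ∈ Q, f ⟨p, hp⟩ = i.castSucc) := by
    intro f i p hp
    rw [Phi, prime_dvd_prime_prod hp _ _ (fun q _ => hprime q)]
    constructor
    · rintro ⟨q, hq, rfl⟩
      exact ⟨q.2, (Finset.mem_filter.mp hq).2⟩
    · rintro ⟨hpQ, hf⟩
      exact ⟨⟨p, hpQ⟩, Finset.mem_filter.mpr ⟨Finset.mem_univ _, hf⟩, rfl⟩
  have hadm : ∀ (f : ↥Q → Fin 8) (i : Fin 7), XAdmissible X (Phi Q f i) := by
    intro f i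
    refine ⟨squarefree_prime_prod _ _ (fun q _ => hprime q) (hinj _), ?_⟩
    intro p hp hpd
    obtain ⟨hpQ, -⟩ := (hdvd f i p hp).mp hpd
    exact (hQmem.mp hpQ).2
  have hcop : ∀ (f : ↥Q → Fin 8) (i j : Fin 7), i ≠ j → Nat.Coprime (Phi Q f i) (Phi Q f j) := by
    intro f i j hij
    apply Nat.Coprime.prod_left
    intro q hq
    apply cop_prime_prod (hprime q) _ _ (fun r _ => hprime r)
    intro r hr hre
    have hrq : r = q := Subtype.ext hre
    subst hrq
    have h1 : f r = i.castSucc := (Finset.mem_filter.mp hq).2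
    have h2 : f r = j.castSucc := (Finset.mem_filter.mp hr).2
    exact hij (Fin.castSucc_injective _ (h1 ▸ h2))
  have hkey : ∀ (f g : ↥Q → Fin 8), Phi Q f = Phi Q g → ∀ (q : ↥Q) (i : Fin 7),
      f q = i.castSucc → g q = i.castSucc := by
    intro f g h q i hf
    have hd : (q : ℕ) ∣ Phi Q f i := (hdvd f i q (hprime q)).mpr ⟨q.2, hf⟩
    rw [h] at hd
    obtain ⟨hq, hgq⟩ := (hdvd g i q (hprime q)).mp hd
    exact hgq
  have hPhiInj : ∀ f g : ↥Q → Fin 8, Phi Q f = Phi Q g → f = g := by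
    intro f g h
    funext q
    by_cases hf7 : f q = Fin.last 7
    · by_cases hg7 : g q = Fin.last 7
      · rw [hf7, hg7]
      · exfalso
        have hi := hkey g f h.symm q ((g q).castPred hg7) (Fin.castSucc_castPred _ hg7).symm
        rw [hf7] at hi
        exact (Fin.castSucc_lt_last _).ne' hi
    · have hi := hkey f g h q ((f q).castPred hf7) (Fin.castSucc_castPred _ hf7).symm
      rw [hi, Fin.castSucc_castPred]
  have hsurj : ∀ v : Fin 7 → ℕ, (∀ i, XAdmissible X (v i)) →
      (∀ i j, i ≠ j → Nat.Coprime (v i) (v j)) → ∃ f, Phi Q f = v := by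
    intro v hv hvc
    refine ⟨fun q => if h : ∃ i : Fin 7, (q : ℕ) ∣ v i then (Classical.choose h).castSucc
      else Fin.last 7, ?_⟩
    funext i
    rw [Phi, ← Nat.prod_primeFactors_of_squarefree (hv i).1]
    refine Finset.prod_bij (fun q _ => (q : ℕ)) ?_ ?_ ?_ (fun _ _ => rfl)
    · intro q hq
      simp only [Finset.mem_filter, Finset.mem_univ, true_and] at hq
      by_cases h : ∃ j : Fin 7, (q : ℕ) ∣ v j
      · rw [dif_pos h] at hq
        have hji : Classical.choose h = i := Fin.castSucc_injective _ hq
        have hd : (q : ℕ) ∣ v i := hji ▸ Classical.choose_spec h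
        exact Nat.mem_primeFactors.mpr ⟨hprime q, hd, (hv i).1.ne_zero⟩
      · rw [dif_neg h] at hq
        exact absurd hq (Fin.castSucc_lt_last i).ne'
    · intro a _ b _ hab; exact Subtype.ext hab
    · intro p hp
      obtain ⟨hpp, hpd, hne⟩ := Nat.mem_primeFactors.mp hp
      have hpQ : p ∈ Q := hQmem.mpr ⟨hpp, (hv i).2 p hpp hpd⟩
      refine ⟨⟨p, hpQ⟩, ?_, rfl⟩
      simp only [Finset.mem_filter, Finset.mem_univ, true_and]
      have hex : ∃ j : Fin 7, p ∣ v j := ⟨i, hpd⟩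
      rw [dif_pos hex]
      have hci : Classical.choose hex = i := by
        by_contra hji
        have h1 := Classical.choose_spec hex
        have hco := hvc _ _ hji
        have hdg : p ∣ Nat.gcd (v (Classical.choose hex)) (v i) := Nat.dvd_gcd h1 hpd
        rw [Nat.Coprime] at hco
        rw [hco] at hdg
        exact hpp.ne_one (Nat.dvd_one.mp hdg)
      rw [hci]
  have hval : ∀ f : ↥Q → Fin 8,
      (∏ q : ↥Q, Cfn s (q : ℕ) (f q)) = ∏ i : Fin 7, Wfn s i (Phi Q f i) := by
    intro f
    rw [← Finset.prod_fiberwise Finset.univ f (fun q : ↥Q => Cfn s (q : ℕ) (f q))]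
    rw [Fin.prod_univ_castSucc]
    have hlast : (∏ q ∈ Finset.univ.filter (fun q : ↥Q => f q = Fin.last 7),
        Cfn s (q : ℕ) (f q)) = 1 := by
      apply Finset.prod_eq_one
      intro q hq
      rw [(Finset.mem_filter.mp hq).2, Cfn_last]
    rw [hlast, mul_one]
    refine Finset.prod_congr rfl ?_
    intro i _
    rw [Phi, Wfn_prod s i _ _ (fun q _ => hprime q) (hinj _)]
    refine Finset.prod_congr rfl ?_
    intro q hq
    rw [(Finset.mem_filter.mp hq).2, Cfn_castSucc]
  have step1 : (∑' v : Fin 7 → ℕ,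
      if (∀ i, XAdmissible X (v i)) ∧ (∀ i j, i ≠ j → Nat.Coprime (v i) (v j)) then
        ((ArithmeticFunction.moebius (v 5) : ℝ) *
          (ArithmeticFunction.moebius (v 6) : ℝ) *
          (v 0 : ℝ) ^ (-(4 * s)) * (v 1 : ℝ) ^ (-(6 * s)) * (v 2 : ℝ) ^ (-(6 * s)) *
          (v 3 : ℝ) ^ (-(4 * s)) * (v 4 : ℝ) ^ (-(2 * s)) *
          (v 5 : ℝ) ^ (-(2 * s)) * (v 6 : ℝ) ^ (-(2 * s)))
      else 0 : ℝ) = ∑ v ∈ Finset.image (Phi Q) Finset.univ, (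
      if (∀ i, XAdmissible X (v i)) ∧ (∀ i j, i ≠ j → Nat.Coprime (v i) (v j)) then
        ((ArithmeticFunction.moebius (v 5) : ℝ) *
          (ArithmeticFunction.moebius (v 6) : ℝ) *
          (v 0 : ℝ) ^ (-(4 * s)) * (v 1 : ℝ) ^ (-(6 * s)) * (v 2 : ℝ) ^ (-(6 * s)) *
          (v 3 : ℝ) ^ (-(4 * s)) * (v 4 : ℝ) ^ (-(2 * s)) *
          (v 5 : ℝ) ^ (-(2 * s)) * (v 6 : ℝ) ^ (-(2 * s)))
      else 0 : ℝ) := by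
    apply tsum_eq_sum
    intro v hv
    rw [if_neg]
    rintro ⟨h1, h2⟩
    obtain ⟨f, hf⟩ := hsurj v h1 h2
    exact hv (Finset.mem_image.mpr ⟨f, Finset.mem_univ f, hf⟩)
  rw [step1, Finset.sum_image (fun f _ g _ h => hPhiInj f g h)]
  have step2 : ∀ f : ↥Q → Fin 8, (
      if (∀ i, XAdmissible X (Phi Q f i)) ∧
          (∀ i j, i ≠ j → Nat.Coprime (Phi Q f i) (Phi Q f j)) then
        ((ArithmeticFunction.moebius (Phi Q f 5) : ℝ) *
          (ArithmeticFunction.moebius (Phi Q f 6) : ℝ) *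
          (Phi Q f 0 : ℝ) ^ (-(4 * s)) * (Phi Q f 1 : ℝ) ^ (-(6 * s)) *
          (Phi Q f 2 : ℝ) ^ (-(6 * s)) * (Phi Q f 3 : ℝ) ^ (-(4 * s)) *
          (Phi Q f 4 : ℝ) ^ (-(2 * s)) * (Phi Q f 5 : ℝ) ^ (-(2 * s)) *
          (Phi Q f 6 : ℝ) ^ (-(2 * s)))
      else 0 : ℝ) = ∏ q : ↥Q, Cfn s (q : ℕ) (f q) := by
    intro f
    rw [if_pos ⟨hadm f, hcop f⟩, summand_eq_prod s (Phi Q f), hval f]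
  rw [Finset.sum_congr rfl (fun f _ => step2 f), ← Fintype.piFinset_univ,
    ← Finset.prod_univ_sum]
  exact Finset.prod_coe_sort Q (fun p => ∑ j : Fin 8, Cfn s p j)

noncomputable def zexp (c : ℝ) (hc : c ≠ 0) : ℕ →*₀ ℝ where
  toFun n := (n : ℝ) ^ c
  map_zero' := by simp [Real.zero_rpow hc]
  map_one' := by simp
  map_mul' a b := by
    push_cast
    exact Real.mul_rpow (Nat.cast_nonneg a) (Nat.cast_nonneg b)

lemma zexp_apply (c : ℝ) (hc : c ≠ 0) (n : ℕ) : zexp c hc n = (n : ℝ) ^ c := rfl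

set_option maxHeartbeats 1000000 in
theorem zeta_times_sevenfold_sum_eq_euler_products
    (X σ : ℝ) (hX : 2 ≤ X) (hσ : 1 / 2 < σ) :
    (riemannZeta ((2 * σ : ℝ) : ℂ)) *
      ((∑' v : Fin 7 → ℕ,
          if (∀ i, XAdmissible X (v i)) ∧ (∀ i j, i ≠ j → Nat.Coprime (v i) (v j)) then
            ((ArithmeticFunction.moebius (v 5) : ℝ) *
              (ArithmeticFunction.moebius (v 6) : ℝ) *
              (v 0 : ℝ) ^ (-(4 * σ)) * (v 1 : ℝ) ^ (-(6 * σ)) * (v 2 : ℝ) ^ (-(6 * σ)) *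
              (v 3 : ℝ) ^ (-(4 * σ)) * (v 4 : ℝ) ^ (-(2 * σ)) *
              (v 5 : ℝ) ^ (-(2 * σ)) * (v 6 : ℝ) ^ (-(2 * σ)))
          else 0 : ℝ) : ℂ) =
    (((∏' p : Nat.Primes, if X ≤ ((p : ℕ) : ℝ) then (1 - ((p : ℕ) : ℝ) ^ (-(2 * σ)))⁻¹ else 1) *
      ∏ p ∈ Finset.filter (fun p : ℕ => p.Prime ∧ (p : ℝ) < X) (Finset.range (⌈X⌉₊ + 1)),
        (1 + 2 * ((p : ℝ) ^ (2 * σ) + 1) / ((p : ℝ) ^ (4 * σ) * ((p : ℝ) ^ (2 * σ) - 1))) : ℝ) : ℂ) := by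
  have hσ1 : 1 < 2 * σ := by linarith
  have hc : -(2 * σ) ≠ 0 := by intro h; nlinarith
  set Q := Finset.filter (fun p : ℕ => p.Prime ∧ (p : ℝ) < X) (Finset.range (⌈X⌉₊ + 1)) with hQdef
  have hQmem : ∀ {p : ℕ}, p ∈ Q ↔ p.Prime ∧ (p : ℝ) < X := by
    intro p
    simp only [hQdef, Finset.mem_filter, Finset.mem_range]
    constructor
    · rintro ⟨-, h⟩; exact h
    · rintro ⟨hp, hlt⟩
      refine ⟨?_, hp, hlt⟩
      have h1 : (p : ℝ) ≤ (⌈X⌉₊ : ℝ) := hlt.le.trans (Nat.le_ceil X)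
      have h2 : p ≤ ⌈X⌉₊ := by exact_mod_cast h1
      omega
  -- Euler product for the real zeta sum
  have hsum : Summable (fun n => ‖zexp (-(2 * σ)) hc n‖) := by
    have : ∀ n : ℕ, ‖zexp (-(2 * σ)) hc n‖ = (n : ℝ) ^ (-(2 * σ)) := fun n => by
      rw [zexp_apply, Real.norm_of_nonneg (Real.rpow_nonneg (Nat.cast_nonneg n) _)]
    rw [funext this]
    exact Real.summable_nat_rpow.mpr (by linarith)
  set Z : ℝ := ∑' n, zexp (-(2 * σ)) hc n with hZdef
  have hProd : HasProd (fun p : Nat.Primes => (1 - ((p : ℕ) : ℝ) ^ (-(2 * σ)))⁻¹) Z :=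
    EulerProduct.eulerProduct_completely_multiplicative_hasProd hsum
  -- riemannZeta equals the cast of Z
  have hζ : riemannZeta ((2 * σ : ℝ) : ℂ) = (Z : ℂ) := by
    rw [zeta_eq_tsum_one_div_nat_cpow (by simpa using hσ1), hZdef, Complex.ofReal_tsum]
    refine tsum_congr fun n => ?_
    rw [zexp_apply, one_div, show ((n : ℕ) : ℂ) = (((n : ℕ) : ℝ) : ℂ) from by norm_cast,
      ← Complex.ofReal_cpow (Nat.cast_nonneg n), ← Complex.ofReal_inv,
      ← Real.rpow_neg (Nat.cast_nonneg n)]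
  -- splitting the Euler product at X
  have hemb : Function.Injective (fun q : ↥Q => (⟨(q : ℕ), (hQmem.mp q.2).1⟩ : Nat.Primes)) := by
    intro a b h
    simp only [Subtype.mk.injEq] at h
    exact Subtype.ext h
  set s' : Finset Nat.Primes := Q.attach.map ⟨_, hemb⟩ with hs'def
  have hs'mem : ∀ p : Nat.Primes, p ∈ s' ↔ ((p : ℕ) ∈ Q) := by
    intro p
    constructor
    · intro hp
      obtain ⟨q, -, rfl⟩ := Finset.mem_map.mp hp
      exact q.2
    · intro hp
      exact Finset.mem_map.mpr ⟨⟨(p : ℕ), hp⟩, Finset.mem_attach _ _, Subtype.ext rfl⟩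
  have htlt : ∀ p : Nat.Primes, ((p : ℕ) : ℝ) ^ (-(2 * σ)) < 1 := by
    intro p
    have : (1:ℝ) < (p : ℕ) := by exact_mod_cast p.2.one_lt
    exact Real.rpow_lt_one_of_one_lt_of_neg this (by linarith)
  have hFne : ∀ p : Nat.Primes, (1 - ((p : ℕ) : ℝ) ^ (-(2 * σ))) ≠ 0 := fun p => by
    have := htlt p; intro h; nlinarith
  set G : Nat.Primes → ℝ :=
    fun p => if X ≤ ((p : ℕ) : ℝ) then (1 - ((p : ℕ) : ℝ) ^ (-(2 * σ)))⁻¹ else 1 with hGdef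
  set H : Nat.Primes → ℝ :=
    fun p => if X ≤ ((p : ℕ) : ℝ) then 1 else (1 - ((p : ℕ) : ℝ) ^ (-(2 * σ)))⁻¹ with hHdef
  set Hinv : Nat.Primes → ℝ :=
    fun p => if X ≤ ((p : ℕ) : ℝ) then 1 else (1 - ((p : ℕ) : ℝ) ^ (-(2 * σ))) with hHinvdef
  have hout : ∀ p : Nat.Primes, p ∉ s' → X ≤ ((p : ℕ) : ℝ) := by
    intro p hp
    by_contra hlt
    exact hp ((hs'mem p).mpr (hQmem.mpr ⟨p.2, not_le.mp hlt⟩))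
  have hH : HasProd H (∏ p ∈ s', H p) :=
    hasProd_prod_of_ne_finset_one fun p hp => if_pos (hout p hp)
  have hHinv : HasProd Hinv (∏ p ∈ s', Hinv p) :=
    hasProd_prod_of_ne_finset_one fun p hp => if_pos (hout p hp)
  have hGmul : Multipliable G := by
    have hGeq : G = fun p : Nat.Primes => (1 - ((p : ℕ) : ℝ) ^ (-(2 * σ)))⁻¹ * Hinv p := by
      funext p
      by_cases h : X ≤ ((p : ℕ) : ℝ)
      · simp [hGdef, hHinvdef, h]
      · simp only [hGdef, hHinvdef, if_neg h]
        exact (inv_mul_cancel₀ (hFne p)).symm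
    rw [hGeq]
    exact hProd.multipliable.mul hHinv.multipliable
  have hFGH : (fun p : Nat.Primes => (1 - ((p : ℕ) : ℝ) ^ (-(2 * σ)))⁻¹)
      = fun p => G p * H p := by
    funext p
    by_cases h : X ≤ ((p : ℕ) : ℝ) <;> simp [hGdef, hHdef, h]
  have hZsplit : Z = (∏' p, G p) * ∏ p ∈ s', H p := by
    refine hProd.unique ?_
    rw [hFGH]
    exact hGmul.hasProd.mul hH
  have hHprod : (∏ p ∈ s', H p) = ∏ q ∈ Q, (1 - (q : ℝ) ^ (-(2 * σ)))⁻¹ := by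
    rw [hs'def, Finset.prod_map]
    rw [show (∏ q ∈ Q.attach,
        H ((⟨fun q : ↥Q => (⟨(q : ℕ), (hQmem.mp q.2).1⟩ : Nat.Primes), hemb⟩ : ↥Q ↪ Nat.Primes) q))
      = ∏ q ∈ Q.attach, (1 - ((q : ℕ) : ℝ) ^ (-(2 * σ)))⁻¹ from
      Finset.prod_congr rfl fun q _ => if_neg (not_le.mpr (hQmem.mp q.2).2)]
    exact Finset.prod_attach Q (fun q => (1 - (q : ℝ) ^ (-(2 * σ)))⁻¹)
  -- now the real identity
  rw [hζ, tsum_admissible_eq X σ, ← Complex.ofReal_mul]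
  congr 1
  rw [hZsplit, hHprod, mul_assoc, ← Finset.prod_mul_distrib]
  congr 1
  refine Finset.prod_congr rfl fun q hq => ?_
  exact local_identity σ hσ (hQmem.mp hq).1
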